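/- arXiv:2010.16315 — 2 statements merged into one kernel-verified Lean document; each statement's English description precedes it below -/
import Mathlib

section
/- For every connected graph G, th_pd×(G) ≥ ⌈|V(G)| / (Δ(G) + 1)⌉. -/
open SimpleGraph Set

variable {V : Type*} {W : Type*}

/-- The closed neighborhood of a set `S`. -/
def closedNbhdSet (G : SimpleGraph V) (S : Set V) : Set V :=
  S ∪ {w | ∃ u ∈ S, G.Adj u w}

/-- One round of the zero forcing propagation step. -/
def pdStep (G : SimpleGraph V) (A : Set V) : Set V :=
  A ∪ {w | ∃ u ∈ A, G.neighborSet u \ A = {w}}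

/-- `obs G S k` is the set `P^[k](S)` of vertices observed after round `k`. -/
def obs (G : SimpleGraph V) (S : Set V) : ℕ → Set V
  | 0 => S
  | 1 => closedNbhdSet G S
  | (n + 2) => pdStep G (obs G S (n + 1))

/-- `S` is a power dominating set. -/
def IsPDS (G : SimpleGraph V) (S : Set V) : Prop :=
  ∃ t, obs G S t = Set.univ

/-- The power propagation time `pt_pd(G;S)`: least positive `t` with `P^[t](S) = V(G)`. -/
noncomputable def ptpd (G : SimpleGraph V) (S : Set V) : ℕ :=
  sInf {t | 1 ≤ t ∧ obs G S t = Set.univ}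

/-- `S` is a dominating set. -/
def IsDomSet (G : SimpleGraph V) (S : Set V) : Prop :=
  closedNbhdSet G S = Set.univ

/-- The domination number `γ(G)`. -/
noncomputable def gamma (G : SimpleGraph V) : ℕ :=
  sInf {k | ∃ S : Set V, IsDomSet G S ∧ S.ncard = k}

/-- The power domination number `γ_P(G)`. -/
noncomputable def gammaP (G : SimpleGraph V) : ℕ :=
  sInf {k | ∃ S : Set V, IsPDS G S ∧ S.ncard = k}

/-- The product power throttling number `th_pd^×(G)`. -/
noncomputable def thpd (G : SimpleGraph V) : ℕ :=
  sInf {m | ∃ S : Set V, IsPDS G S ∧ m = S.ncard * ptpd G S}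

/-- The power propagation time of `G`: minimum over minimum power dominating sets. -/
noncomputable def ptG (G : SimpleGraph V) : ℕ :=
  sInf {t | ∃ S : Set V, IsPDS G S ∧ S.ncard = gammaP G ∧ t = ptpd G S}

/-- `newObs G S k` is `P^(k)(S)`, the set of vertices first observed in round `k`. -/
def newObs (G : SimpleGraph V) (S : Set V) : ℕ → Set V
  | 0 => S
  | (k + 1) => obs G S (k + 1) \ obs G S k

/-- `rd G S v` is the round in which `v` is first observed. -/
noncomputable def rd (G : SimpleGraph V) (S : Set V) (v : V) : ℕ :=
  sInf {k | v ∈ obs G S k}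

section Aux

variable (G : SimpleGraph V) (S : Set V)

lemma obs_mono_succ (k : ℕ) : obs G S k ⊆ obs G S (k + 1) := by
  match k with
  | 0 => exact subset_union_left
  | (n + 1) => exact subset_union_left

lemma obs_mono {k l : ℕ} (h : k ≤ l) : obs G S k ⊆ obs G S l := by
  induction l with
  | zero => simpa [Nat.le_zero.mp h] using Set.Subset.rfl
  | succ n ih =>
    rcases Nat.lt_or_ge k (n+1) with h' | h'
    · exact (ih (by omega)).trans (obs_mono_succ G S n)
    · have : k = n + 1 := by omega
      subst this; rfl

/-- The forcing relation. -/
def Forces (u v : V) : Prop :=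
  ∃ a, u ∈ obs G S (a + 1) ∧ G.neighborSet u \ obs G S (a + 1) = {v}

noncomputable def forcerMap : V → V :=
  fun v =>
    letI := Classical.propDecidable (∃ u, Forces G S u v)
    if h : ∃ u, Forces G S u v then h.choose else v

variable {G S}

lemma forces_unique {u v v' : V} (h : Forces G S u v) (h' : Forces G S u v') : v = v' := by
  obtain ⟨a, -, ha⟩ := h
  obtain ⟨b, -, hb⟩ := h'
  rcases le_total a b with hab | hab
  · have hsub : G.neighborSet u \ obs G S (b+1) ⊆ G.neighborSet u \ obs G S (a+1) :=
      diff_subset_diff_right (obs_mono G S (by omega))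
    rw [ha, hb] at hsub
    simpa using (hsub rfl).symm
  · have hsub : G.neighborSet u \ obs G S (a+1) ⊆ G.neighborSet u \ obs G S (b+1) :=
      diff_subset_diff_right (obs_mono G S (by omega))
    rw [ha, hb] at hsub
    simpa using hsub rfl

lemma not_obs1_of_forces {u v : V} (h : Forces G S u v) : v ∉ obs G S 1 := by
  obtain ⟨a, -, ha⟩ := h
  have : v ∈ G.neighborSet u \ obs G S (a+1) := by rw [ha]; rfl
  exact fun hv => this.2 (obs_mono G S (by omega) hv)

lemma forcerMap_eq_self {v : V} (hv : v ∈ obs G S 1) : forcerMap G S v = v := by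
  classical
  rw [forcerMap]
  rw [dif_neg]
  rintro ⟨u, hu⟩
  exact not_obs1_of_forces hu hv

lemma forcerMap_iterate_eq_self {v : V} (hv : v ∈ obs G S 1) (n : ℕ) :
    (forcerMap G S)^[n] v = v :=
  Function.iterate_fixed (forcerMap_eq_self hv) n

lemma forcerMap_spec {v : V} (h : ∃ u, Forces G S u v) :
    Forces G S (forcerMap G S v) v := by
  classical
  rw [forcerMap]
  rw [dif_pos h]
  exact h.choose_spec

lemma forcerMap_injOn {v v' : V} (hv : v ∉ obs G S 1) (hv' : v' ∉ obs G S 1)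
    (hvv : (∃ u, Forces G S u v)) (hvv' : (∃ u, Forces G S u v'))
    (h : forcerMap G S v = forcerMap G S v') : v = v' := by
  have h1 := forcerMap_spec hvv
  have h2 := forcerMap_spec hvv'
  rw [h] at h1
  exact forces_unique h1 h2

section WithU

variable {t : ℕ} (hU : obs G S t = Set.univ)
include hU

lemma rd_mem (v : V) : v ∈ obs G S (rd G S v) :=
  Nat.sInf_mem (⟨t, by rw [Set.mem_setOf_eq, hU]; trivial⟩ : {k | v ∈ obs G S k}.Nonempty)

omit hU in
lemma rd_le {v : V} {m : ℕ} (h : v ∈ obs G S m) : rd G S v ≤ m := Nat.sInf_le h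

lemma lt_rd {v : V} {m : ℕ} (h : v ∉ obs G S m) : m < rd G S v := by
  by_contra hc
  exact h (obs_mono G S (by omega) (rd_mem hU v))

lemma rd_le_t (v : V) : rd G S v ≤ t := rd_le (by rw [hU]; trivial)

lemma forced_of_not_obs1 {v : V} (hv : v ∉ obs G S 1) : ∃ u, Forces G S u v := by
  have h0 : v ∉ obs G S 0 := fun h => hv (obs_mono G S (by omega) h)
  have h2 : 2 ≤ rd G S v := by
    have := lt_rd hU hv
    omega
  obtain ⟨k, hk⟩ : ∃ k, rd G S v = k + 2 := ⟨rd G S v - 2, by omega⟩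
  have hmem : v ∈ obs G S (k + 2) := by rw [← hk]; exact rd_mem hU v
  have hnot : v ∉ obs G S (k + 1) := fun h => by have := rd_le h; omega
  rcases hmem with h | h
  · exact absurd h hnot
  · obtain ⟨u, hu, huv⟩ := h
    exact ⟨u, k, hu, huv⟩

lemma rd_forcerMap_lt {v : V} (h : ∃ u, Forces G S u v) :
    rd G S (forcerMap G S v) < rd G S v := by
  obtain ⟨a, hu, ha⟩ := forcerMap_spec h
  have h2 : rd G S (forcerMap G S v) ≤ a + 1 := rd_le hu
  have h3 : v ∉ obs G S (a + 1) := by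
    have : v ∈ G.neighborSet (forcerMap G S v) \ obs G S (a+1) := by rw [ha]; rfl
    exact this.2
  have := lt_rd hU h3
  omega

lemma rd_forcerMap_le (v : V) : rd G S (forcerMap G S v) ≤ rd G S v := by
  by_cases h : ∃ u, Forces G S u v
  · exact le_of_lt (rd_forcerMap_lt hU h)
  · classical
    rw [forcerMap]
    rw [dif_neg h]

lemma rd_iterate_le (m : ℕ) (v : V) : rd G S ((forcerMap G S)^[m] v) ≤ rd G S v := by
  induction m with
  | zero => rfl
  | succ n ih =>
    rw [Function.iterate_succ_apply']
    exact (rd_forcerMap_le hU _).trans ih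

lemma exit_obs1 : ∀ (n : ℕ) (v : V), rd G S v ≤ n → (forcerMap G S)^[n] v ∈ obs G S 1 := by
  intro n
  induction n with
  | zero =>
    intro v h
    have : v ∈ obs G S 0 := by
      have := rd_mem hU v
      rwa [Nat.le_zero.mp h] at this
    exact obs_mono G S (by omega) this
  | succ n ih =>
    intro v h
    by_cases hv : v ∈ obs G S 1
    · rw [forcerMap_iterate_eq_self hv]; exact hv
    · have hf := forced_of_not_obs1 hU hv
      have h2 : rd G S (forcerMap G S v) ≤ n := by
        have := rd_forcerMap_lt hU hf
        omega
      rw [Function.iterate_succ_apply]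
      exact ih _ h2

lemma cancel : ∀ (i : ℕ) (a b : V), (∀ l ≤ i, (forcerMap G S)^[l] a ∉ obs G S 1) →
    (∀ l ≤ i, (forcerMap G S)^[l] b ∉ obs G S 1) →
    (forcerMap G S)^[i+1] a = (forcerMap G S)^[i+1] b → a = b := by
  intro i
  induction i with
  | zero =>
    intro a b ha hb heq
    exact forcerMap_injOn (ha 0 le_rfl) (hb 0 le_rfl)
      (forced_of_not_obs1 hU (ha 0 le_rfl)) (forced_of_not_obs1 hU (hb 0 le_rfl)) heq
  | succ i ih =>
    intro a b ha hb heq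
    rw [Function.iterate_succ_apply' (forcerMap G S) (i+1) a,
      Function.iterate_succ_apply' (forcerMap G S) (i+1) b] at heq
    have h1 : (forcerMap G S)^[i+1] a = (forcerMap G S)^[i+1] b :=
      forcerMap_injOn (ha (i+1) le_rfl) (hb (i+1) le_rfl)
        (forced_of_not_obs1 hU (ha (i+1) le_rfl)) (forced_of_not_obs1 hU (hb (i+1) le_rfl)) heq
    exact ih a b (fun l hl => ha l (by omega)) (fun l hl => hb l (by omega)) h1

lemma inj_core {v v' : V} {i j : ℕ}
    (hA : ∀ l ≤ i, (forcerMap G S)^[l] v ∉ obs G S 1)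
    (hB : ∀ l ≤ j, (forcerMap G S)^[l] v' ∉ obs G S 1)
    (hij : i ≤ j)
    (heq : (forcerMap G S)^[i+1] v = (forcerMap G S)^[j+1] v')
    (hrd : rd G S v = rd G S v') : v = v' := by
  have hsplit : (forcerMap G S)^[j+1] v' = (forcerMap G S)^[i+1] ((forcerMap G S)^[j-i] v') := by
    rw [← Function.iterate_add_apply]
    congr 1
    omega
  rw [hsplit] at heq
  have hBcond : ∀ l ≤ i, (forcerMap G S)^[l] ((forcerMap G S)^[j-i] v') ∉ obs G S 1 := by
    intro l hl
    rw [← Function.iterate_add_apply]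
    exact hB _ (by omega)
  have hv : v = (forcerMap G S)^[j-i] v' := cancel hU i v _ hA hBcond heq
  rcases Nat.eq_or_lt_of_le hij with h | h
  · rw [h] at hv
    simpa using hv
  · exfalso
    have hv'1 : v' ∉ obs G S 1 := hB 0 (by omega)
    have hforced : ∃ u, Forces G S u v' := forced_of_not_obs1 hU hv'1
    have hd : j - i = (j - i - 1) + 1 := by omega
    have : rd G S ((forcerMap G S)^[j-i] v') < rd G S v' := by
      rw [hd, Function.iterate_succ_apply]
      calc rd G S ((forcerMap G S)^[j-i-1] (forcerMap G S v'))
          ≤ rd G S (forcerMap G S v') := rd_iterate_le hU _ _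
        _ < rd G S v' := rd_forcerMap_lt hU hforced
    rw [← hv, hrd] at this
    omega

lemma inj_main (ht : 1 ≤ t) {v v' : V} (hv : v ∉ obs G S 1) (hv' : v' ∉ obs G S 1)
    (hrd : rd G S v = rd G S v')
    (heq : (forcerMap G S)^[t] v = (forcerMap G S)^[t] v') : v = v' := by
  have exwit : ∀ w : V, ∃ m, (forcerMap G S)^[m+1] w ∈ obs G S 1 := by
    intro w
    refine ⟨t - 1, ?_⟩
    have : t - 1 + 1 = t := by omega
    rw [this]
    exact exit_obs1 hU t w (rd_le_t hU w)
  classical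
  set i := Nat.find (exwit v) with hi
  set j := Nat.find (exwit v') with hj
  have hAi : ∀ l ≤ i, (forcerMap G S)^[l] v ∉ obs G S 1 := by
    intro l hl
    match l with
    | 0 => exact hv
    | (l' + 1) => exact Nat.find_min (exwit v) (by omega)
  have hBj : ∀ l ≤ j, (forcerMap G S)^[l] v' ∉ obs G S 1 := by
    intro l hl
    match l with
    | 0 => exact hv'
    | (l' + 1) => exact Nat.find_min (exwit v') (by omega)
  have hstopv : ∀ w : V, (forcerMap G S)^[t] w = (forcerMap G S)^[Nat.find (exwit w) + 1] w := by
    intro w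
    have hle : Nat.find (exwit w) ≤ t - 1 := by
      apply Nat.find_le
      have h1 : t - 1 + 1 = t := by omega
      rw [h1]
      exact exit_obs1 hU t w (rd_le_t hU w)
    have hsplit : t = (t - (Nat.find (exwit w) + 1)) + (Nat.find (exwit w) + 1) := by omega
    rw [hsplit, Function.iterate_add_apply]
    exact forcerMap_iterate_eq_self (Nat.find_spec (exwit w)) _
  rw [hstopv v, hstopv v'] at heq
  rcases le_total i j with hij | hij
  · exact inj_core hU hAi hBj hij (by rw [← hi, ← hj] at heq; exact heq) hrd
  · exact (inj_core hU hBj hAi hij (by rw [← hi, ← hj] at heq; exact heq.symm) hrd.symm).symm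

end WithU

end Aux

section Count

variable [Fintype V] {G : SimpleGraph V} {S : Set V} {t : ℕ}

lemma newObs_ncard_le (hU : obs G S t = Set.univ) (ht : 1 ≤ t) (k : ℕ) :
    (newObs G S (k+2)).ncard ≤ (obs G S 1).ncard := by
  have hsub : newObs G S (k+2) = obs G S (k+2) \ obs G S (k+1) := rfl
  apply Set.ncard_le_ncard_of_injOn ((forcerMap G S)^[t])
  · intro v _
    exact exit_obs1 hU t v (rd_le_t hU v)
  · intro v hv v' hv' heq
    rw [hsub] at hv hv'
    have h1 : v ∉ obs G S 1 := fun h => hv.2 (obs_mono G S (by omega) h)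
    have h1' : v' ∉ obs G S 1 := fun h => hv'.2 (obs_mono G S (by omega) h)
    have hr : rd G S v = k + 2 := by
      have := rd_le hv.1
      have := lt_rd hU hv.2
      omega
    have hr' : rd G S v' = k + 2 := by
      have := rd_le hv'.1
      have := lt_rd hU hv'.2
      omega
    exact inj_main hU ht h1 h1' (by rw [hr, hr']) heq

lemma obs_ncard_le (hU : obs G S t = Set.univ) (ht : 1 ≤ t) :
    ∀ k, (obs G S (k+1)).ncard ≤ (k+1) * (obs G S 1).ncard := by
  intro k
  induction k with
  | zero => simp
  | succ k ih =>
    have hun : obs G S (k+1) ∪ newObs G S (k+2) = obs G S (k+2) := by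
      rw [show newObs G S (k+2) = obs G S (k+2) \ obs G S (k+1) from rfl,
        Set.union_diff_cancel (obs_mono_succ G S (k+1))]
    calc (obs G S (k+2)).ncard = (obs G S (k+1) ∪ newObs G S (k+2)).ncard := by rw [hun]
      _ ≤ (obs G S (k+1)).ncard + (newObs G S (k+2)).ncard := Set.ncard_union_le _ _
      _ ≤ (k+1) * (obs G S 1).ncard + (obs G S 1).ncard :=
          Nat.add_le_add ih (newObs_ncard_le hU ht k)
      _ = (k+2) * (obs G S 1).ncard := by ring

lemma biUnion_ncard_le {g : V → Set V} {c : ℕ} (hg : ∀ u, (g u).ncard ≤ c) (s : Set V) :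
    (⋃ u ∈ s, g u).ncard ≤ s.ncard * c := by
  refine Set.Finite.induction_on
    (motive := fun s _ => (⋃ u ∈ s, g u).ncard ≤ s.ncard * c) s s.toFinite (by simp) ?_
  intro a s' ha hfin ih
  rw [Set.biUnion_insert]
  calc (g a ∪ ⋃ u ∈ s', g u).ncard ≤ (g a).ncard + (⋃ u ∈ s', g u).ncard :=
        Set.ncard_union_le _ _
    _ ≤ c + s'.ncard * c := Nat.add_le_add (hg a) ih
    _ = (s'.ncard + 1) * c := by ring
    _ = (insert a s').ncard * c := by rw [Set.ncard_insert_of_notMem ha hfin]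

lemma dom_ncard_le (G : SimpleGraph V) [DecidableRel G.Adj] (S : Set V) :
    (obs G S 1).ncard ≤ S.ncard * (G.maxDegree + 1) := by
  have hsub : obs G S 1 ⊆ ⋃ u ∈ S, insert u (G.neighborSet u) := by
    intro x hx
    rcases hx with h | h
    · exact Set.mem_biUnion h (Set.mem_insert _ _)
    · obtain ⟨u, hu, hadj⟩ := h
      exact Set.mem_biUnion hu (Set.mem_insert_of_mem _ hadj)
  have hg : ∀ u, (insert u (G.neighborSet u)).ncard ≤ G.maxDegree + 1 := by
    intro u
    calc (insert u (G.neighborSet u)).ncard ≤ (G.neighborSet u).ncard + 1 :=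
          Set.ncard_insert_le _ _
      _ = G.degree u + 1 := by
          rw [Set.ncard_eq_toFinset_card', Set.toFinset_card,
            SimpleGraph.card_neighborSet_eq_degree]
      _ ≤ G.maxDegree + 1 := by
          have := G.degree_le_maxDegree u
          omega
  exact (Set.ncard_le_ncard hsub (Set.toFinite _)).trans (biUnion_ncard_le hg S)

lemma main_count (G : SimpleGraph V) [DecidableRel G.Adj] (S : Set V)
    (ht : 1 ≤ t) (hU : obs G S t = Set.univ) :
    Fintype.card V ≤ S.ncard * t * (G.maxDegree + 1) := by
  obtain ⟨t', rfl⟩ : ∃ t', t = t' + 1 := ⟨t - 1, by omega⟩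
  calc Fintype.card V = (obs G S (t'+1)).ncard := by
        rw [hU, Set.ncard_univ, Nat.card_eq_fintype_card]
    _ ≤ (t'+1) * (obs G S 1).ncard := obs_ncard_le hU ht t'
    _ ≤ (t'+1) * (S.ncard * (G.maxDegree + 1)) :=
        Nat.mul_le_mul_left _ (dom_ncard_le G S)
    _ = S.ncard * (t'+1) * (G.maxDegree + 1) := by ring

end Count


theorem stmt4 [Fintype V] (G : SimpleGraph V) [DecidableRel G.Adj] (hG : G.Connected) :
    ⌈(Fintype.card V : ℚ) / (G.maxDegree + 1)⌉ ≤ (thpd G : ℤ) := by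
  have hPDSuniv : IsPDS G (Set.univ : Set V) := ⟨1, by
    apply Set.eq_univ_of_univ_subset
    intro x _
    exact Or.inl trivial⟩
  have hth : thpd G ∈ {m | ∃ S : Set V, IsPDS G S ∧ m = S.ncard * ptpd G S} :=
    Nat.sInf_mem ⟨_, Set.univ, hPDSuniv, rfl⟩
  obtain ⟨S, hS, hEq⟩ := hth
  have hne : {t | 1 ≤ t ∧ obs G S t = Set.univ}.Nonempty := by
    obtain ⟨t0, h0⟩ := hS
    match t0, h0 with
    | 0, h0 =>
      refine ⟨1, le_rfl, ?_⟩
      apply Set.eq_univ_of_univ_subset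
      intro x _
      have hS0 : S = Set.univ := h0
      exact Or.inl (hS0 ▸ (Set.mem_univ x))
    | (t+1), h0 => exact ⟨t+1, by omega, h0⟩
  have hmem : 1 ≤ ptpd G S ∧ obs G S (ptpd G S) = Set.univ := Nat.sInf_mem hne
  have hmain := main_count G S hmem.1 hmem.2
  rw [← hEq] at hmain
  rw [Int.ceil_le, div_le_iff₀ (by positivity)]
  exact_mod_cast hmain
end

section
/- If H is a connected graph of order at least two and G = H ∘ K_1 is the corona of H with K_1, then th_pd×(G) = 2γ(H). Furthermore, any power dominating set of G contained in V(H) is a dominating set of H. -/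
open SimpleGraph Set

variable {V : Type*} {W : Type*}

/-- The corona `H ∘ K_1`: append one leaf to each vertex of `H`. -/
def corona (H : SimpleGraph V) : SimpleGraph (V ⊕ V) where
  Adj x y :=
    match x, y with
    | Sum.inl u, Sum.inl v => H.Adj u v
    | Sum.inl u, Sum.inr v => u = v
    | Sum.inr u, Sum.inl v => u = v
    | Sum.inr _, Sum.inr _ => False
  symm := by
    constructor
    rintro (u | u) (v | v) h
    · exact h.symm
    · exact h.symm
    · exact h.symm
    · exact h
  loopless := by
    constructor
    rintro (u | u) h
    · exact H.loopless.irrefl u h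
    · exact h

lemma mem_closedNbhdSet {G : SimpleGraph V} {S : Set V} {v : V} :
    v ∈ closedNbhdSet G S ↔ v ∈ S ∨ ∃ u ∈ S, G.Adj u v := Iff.rfl

lemma mem_pdStep {G : SimpleGraph V} {A : Set V} {w : V} :
    w ∈ pdStep G A ↔ w ∈ A ∨ ∃ u ∈ A, G.neighborSet u \ A = {w} := Iff.rfl

lemma corona_adj_inl_inl {H : SimpleGraph V} {u v : V} :
    (corona H).Adj (Sum.inl u) (Sum.inl v) ↔ H.Adj u v := Iff.rfl
lemma corona_adj_inl_inr {H : SimpleGraph V} {u v : V} :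
    (corona H).Adj (Sum.inl u) (Sum.inr v) ↔ u = v := Iff.rfl
lemma corona_adj_inr_inl {H : SimpleGraph V} {u v : V} :
    (corona H).Adj (Sum.inr u) (Sum.inl v) ↔ u = v := Iff.rfl
lemma corona_adj_inr_inr {H : SimpleGraph V} {u v : V} :
    ¬ (corona H).Adj (Sum.inr u) (Sum.inr v) := fun h => h

lemma obs_subset_succ (G : SimpleGraph V) (S : Set V) (k : ℕ) :
    obs G S k ⊆ obs G S (k + 1) := by
  match k with
  | 0 => exact Set.subset_union_left
  | (n+1) => exact Set.subset_union_left

lemma obs_univ_succ (G : SimpleGraph V) (S : Set V) {t : ℕ} (h : obs G S t = Set.univ) :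
    obs G S (t + 1) = Set.univ :=
  Set.eq_univ_of_univ_subset (h ▸ obs_subset_succ G S t)

lemma corona_invariant (H : SimpleGraph V) (S' : Set (V ⊕ V)) (S : Set V)
    (hSl : ∀ v, Sum.inl v ∈ S' → v ∈ S) (hSr : ∀ v, Sum.inr v ∈ S' → v ∈ S) (k : ℕ) :
    (∀ v, Sum.inl v ∈ obs (corona H) S' (k+1) → v ∈ closedNbhdSet H S) ∧
    (∀ v, Sum.inr v ∈ obs (corona H) S' (k+1) → v ∈ S ∨
      (Sum.inl v ∈ obs (corona H) S' (k+1) ∧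
        ∀ w, H.Adj v w → Sum.inl w ∈ obs (corona H) S' (k+1))) := by
  induction k with
  | zero =>
    constructor
    · rintro v (h | ⟨(u|u), hu, hadj⟩)
      · exact Or.inl (hSl v h)
      · exact Or.inr ⟨u, hSl u hu, hadj⟩
      · rw [corona_adj_inr_inl] at hadj
        exact Or.inl (hadj ▸ hSr u hu)
    · rintro v (h | ⟨(u|u), hu, hadj⟩)
      · exact Or.inl (hSr v h)
      · rw [corona_adj_inl_inr] at hadj
        exact Or.inl (hadj ▸ hSl u hu)
      · exact absurd hadj (corona_adj_inr_inr)
  | succ n ih =>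
    obtain ⟨iha, ihb⟩ := ih
    have hsub : obs (corona H) S' (n+1) ⊆ obs (corona H) S' (n+2) :=
      obs_subset_succ _ _ _
    constructor
    · rintro v (h | ⟨u, hu, hforce⟩)
      · exact iha v h
      · have hvmem : Sum.inl v ∈ (corona H).neighborSet u \ obs (corona H) S' (n+1) := by
          rw [hforce]; rfl
        obtain ⟨hadj, hvnot⟩ := hvmem
        match u with
        | Sum.inl x =>
          have hxv : H.Adj x v := hadj
          -- inr x must be observed
          have hinrx : Sum.inr x ∈ obs (corona H) S' (n+1) := by
            by_contra hc
            have : Sum.inr x ∈ (corona H).neighborSet (Sum.inl x) \ obs (corona H) S' (n+1) :=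
              ⟨rfl, hc⟩
            rw [hforce] at this
            exact (Sum.inl_ne_inr this.symm)
          rcases ihb x hinrx with hxS | ⟨_, hall⟩
          · exact Or.inr ⟨x, hxS, hxv⟩
          · exact absurd (hall v hxv) hvnot
        | Sum.inr x =>
          have hx : x = v := hadj
          subst hx
          rcases ihb x hu with hxS | ⟨hinl, _⟩
          · exact Or.inl hxS
          · exact absurd hinl hvnot
    · rintro v (h | ⟨u, hu, hforce⟩)
      · rcases ihb v h with hS | ⟨h1, h2⟩
        · exact Or.inl hS
        · exact Or.inr ⟨hsub h1, fun w hw => hsub (h2 w hw)⟩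
      · have hvmem : Sum.inr v ∈ (corona H).neighborSet u \ obs (corona H) S' (n+1) := by
          rw [hforce]; rfl
        obtain ⟨hadj, hvnot⟩ := hvmem
        match u with
        | Sum.inl x =>
          have hx : x = v := hadj
          subst hx
          refine Or.inr ⟨hsub hu, fun w hw => hsub ?_⟩
          by_contra hc
          have : Sum.inl w ∈ (corona H).neighborSet (Sum.inl x) \ obs (corona H) S' (n+1) :=
            ⟨hw, hc⟩
          rw [hforce] at this
          exact Sum.inr_ne_inl this.symm
        | Sum.inr x =>
          exact hadj.elim

lemma isDomSet_univ (G : SimpleGraph V) : IsDomSet G Set.univ := by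
  simp [IsDomSet, closedNbhdSet]

lemma gamma_le {G : SimpleGraph V} {D : Set V} (h : IsDomSet G D) : gamma G ≤ D.ncard :=
  Nat.sInf_le ⟨D, h, rfl⟩

lemma exists_gamma_set (G : SimpleGraph V) :
    ∃ D : Set V, IsDomSet G D ∧ D.ncard = gamma G :=
  Nat.sInf_mem (⟨Set.univ.ncard, Set.univ, isDomSet_univ G, rfl⟩ : {k | ∃ S : Set V, IsDomSet G S ∧ S.ncard = k}.Nonempty)

lemma exists_adj_of_connected [Fintype V] {H : SimpleGraph V} (hH : H.Connected)
    (hn : 2 ≤ Fintype.card V) (v : V) : ∃ w, H.Adj v w := by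
  obtain ⟨u, hu⟩ := Fintype.exists_ne_of_one_lt_card (by omega) v
  obtain ⟨p⟩ := (hH u v).symm
  cases p with
  | nil => exact absurd rfl hu
  | cons h q => exact ⟨_, h⟩

lemma two_gamma_le [Fintype V] {H : SimpleGraph V} (hH : H.Connected)
    (hn : 2 ≤ Fintype.card V) : 2 * gamma H ≤ Fintype.card V := by
  obtain ⟨D, hD, hcard⟩ := exists_gamma_set H
  have key : ∀ v ∈ D, ∃ w, H.Adj v w ∧ w ∉ D := by
    intro v hv
    by_contra hc
    push_neg at hc
    have hdom : IsDomSet H (D \ {v}) := by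
      rw [IsDomSet, Set.eq_univ_iff_forall]
      intro u
      rcases eq_or_ne u v with rfl | hne
      · obtain ⟨w, hw⟩ := exists_adj_of_connected hH hn u
        exact Or.inr ⟨w, ⟨hc w hw, fun h => H.loopless.irrefl u (Set.mem_singleton_iff.mp h ▸ hw)⟩,
          hw.symm⟩
      · have := hD ▸ Set.mem_univ u
        rcases (mem_closedNbhdSet.mp (hD.symm ▸ Set.mem_univ u)) with hu | ⟨x, hx, hadj⟩
        · exact Or.inl ⟨hu, hne⟩
        · rcases eq_or_ne x v with rfl | hxv
          · exact Or.inl ⟨hc u hadj, hne⟩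
          · exact Or.inr ⟨x, ⟨hx, hxv⟩, hadj⟩
    have h1 : (D \ {v}).ncard + 1 = D.ncard :=
      Set.ncard_diff_singleton_add_one hv (Set.toFinite D)
    have h2 := gamma_le hdom
    omega
  have hcomp : IsDomSet H Dᶜ := by
    rw [IsDomSet, Set.eq_univ_iff_forall]
    intro u
    by_cases hu : u ∈ D
    · obtain ⟨w, hw, hwD⟩ := key u hu
      exact Or.inr ⟨w, hwD, hw.symm⟩
    · exact Or.inl hu
  have h3 := gamma_le hcomp
  have h4 : D.ncard + Dᶜ.ncard = Fintype.card V := by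
    rw [Set.ncard_add_ncard_compl, Nat.card_eq_fintype_card]
  omega

lemma pds_dom (H : SimpleGraph V) (S' : Set (V ⊕ V)) (S : Set V)
    (hSl : ∀ v, Sum.inl v ∈ S' → v ∈ S) (hSr : ∀ v, Sum.inr v ∈ S' → v ∈ S)
    (hp : IsPDS (corona H) S') : IsDomSet H S := by
  obtain ⟨t, ht⟩ := hp
  have ht1 : obs (corona H) S' (t + 1) = Set.univ := obs_univ_succ _ _ ht
  have ha := (corona_invariant H S' S hSl hSr t).1
  rw [IsDomSet, Set.eq_univ_iff_forall]
  intro v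
  exact ha v (ht1 ▸ Set.mem_univ (Sum.inl v : V ⊕ V))

lemma inr_not_mem_obs_one {H : SimpleGraph V} {D : Set V} {v : V} (hv : v ∉ D) :
    Sum.inr v ∉ obs (corona H) (Sum.inl '' D) 1 := by
  rintro (⟨w, _, hw⟩ | ⟨(u|u), hu, hadj⟩)
  · exact Sum.inl_ne_inr hw
  · obtain ⟨w, hwD, hw⟩ := hu
    obtain rfl := Sum.inl_injective hw
    exact hv (corona_adj_inl_inr.mp hadj ▸ hwD)
  · obtain ⟨w, _, hw⟩ := hu
    exact Sum.inl_ne_inr hw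

lemma obs_two_univ {H : SimpleGraph V} {D : Set V} (hD : IsDomSet H D) :
    obs (corona H) (Sum.inl '' D) 2 = Set.univ := by
  have hobs1l : ∀ v : V, Sum.inl v ∈ obs (corona H) (Sum.inl '' D) 1 := by
    intro v
    rcases (mem_closedNbhdSet.mp (hD.symm ▸ Set.mem_univ v)) with hv | ⟨u, hu, hadj⟩
    · exact Or.inl ⟨v, hv, rfl⟩
    · exact Or.inr ⟨Sum.inl u, ⟨u, hu, rfl⟩, hadj⟩
  rw [Set.eq_univ_iff_forall]
  rintro (v | v)
  · exact Set.subset_union_left (hobs1l v)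
  · by_cases hv : v ∈ D
    · refine Set.subset_union_left ?_
      exact Or.inr ⟨Sum.inl v, ⟨v, hv, rfl⟩, rfl⟩
    · refine Or.inr ⟨Sum.inl v, hobs1l v, ?_⟩
      ext (w | w)
      · constructor
        · rintro ⟨-, hnot⟩
          exact absurd (hobs1l w) hnot
        · rintro h
          exact absurd h (Sum.inl_ne_inr)
      · constructor
        · rintro ⟨hadj, -⟩
          have : v = w := hadj
          exact this ▸ rfl
        · rintro h
          rw [Set.mem_singleton_iff] at h
          obtain rfl := Sum.inr_injective h
          exact ⟨rfl, inr_not_mem_obs_one hv⟩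

lemma ptpd_spec {G : SimpleGraph V} {S : Set V} (h : IsPDS G S) :
    1 ≤ ptpd G S ∧ obs G S (ptpd G S) = Set.univ := by
  obtain ⟨t, ht⟩ := h
  exact Nat.sInf_mem (⟨t + 1, Nat.le_add_left 1 t, obs_univ_succ G S ht⟩ :
    {t | 1 ≤ t ∧ obs G S t = Set.univ}.Nonempty)

lemma part2 (H : SimpleGraph V) (S : Set V) (h : IsPDS (corona H) (Sum.inl '' S)) :
    IsDomSet H S := by
  refine pds_dom H _ S ?_ ?_ h
  · rintro v ⟨w, hw, hwv⟩
    exact Sum.inl_injective hwv ▸ hw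
  · rintro v ⟨w, hw, hwv⟩
    exact absurd hwv (Sum.inl_ne_inr)

lemma thpd_lower [Fintype V] (H : SimpleGraph V) (hH : H.Connected)
    (hn : 2 ≤ Fintype.card V) {m : ℕ}
    (hm : m ∈ {m | ∃ S : Set (V ⊕ V), IsPDS (corona H) S ∧ m = S.ncard * ptpd (corona H) S}) :
    2 * gamma H ≤ m := by
  classical
  obtain ⟨S', hp, rfl⟩ := hm
  obtain ⟨hpt1, hptu⟩ := ptpd_spec hp
  set S : Set V := Sum.elim id id '' S' with hSdef
  have hSl : ∀ v, Sum.inl v ∈ S' → v ∈ S := fun v h => ⟨Sum.inl v, h, rfl⟩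
  have hSr : ∀ v, Sum.inr v ∈ S' → v ∈ S := fun v h => ⟨Sum.inr v, h, rfl⟩
  have hdom := pds_dom H S' S hSl hSr hp
  have hγS : gamma H ≤ S'.ncard :=
    le_trans (gamma_le hdom) (Set.ncard_image_le S'.toFinite)
  rcases eq_or_lt_of_le hpt1 with hpt | hpt
  · -- ptpd = 1 : S' dominates the corona, so it has at least one vertex per leaf pair
    rw [← hpt] at hptu ⊢
    have hchoice : ∀ v : V, Sum.inl v ∈ S' ∨ Sum.inr v ∈ S' := by
      intro v
      rcases mem_closedNbhdSet.mp (hptu ▸ Set.mem_univ (Sum.inr v : V ⊕ V)) with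
        h | ⟨(u | u), hu, hadj⟩
      · exact Or.inr h
      · exact Or.inl (corona_adj_inl_inr.mp hadj ▸ hu)
      · exact hadj.elim
    set f : V → V ⊕ V := fun v => if Sum.inr v ∈ S' then Sum.inr v else Sum.inl v with hf
    have hmaps : ∀ v, f v ∈ S' := by
      intro v
      show (if Sum.inr v ∈ S' then Sum.inr v else Sum.inl v) ∈ S'
      split_ifs with h
      · exact h
      · exact (hchoice v).resolve_right h
    have hinj : Function.Injective f := by
      intro a b hab
      simp only [hf] at hab
      by_cases ha : Sum.inr a ∈ S' <;> by_cases hb : Sum.inr b ∈ S'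
      · rw [if_pos ha, if_pos hb] at hab; exact Sum.inr_injective hab
      · rw [if_pos ha, if_neg hb] at hab; exact absurd hab Sum.inr_ne_inl
      · rw [if_neg ha, if_pos hb] at hab; exact absurd hab Sum.inl_ne_inr
      · rw [if_neg ha, if_neg hb] at hab; exact Sum.inl_injective hab
    have hcard : Fintype.card V ≤ S'.ncard := by
      have := Set.ncard_le_ncard_of_injOn f (fun a _ => hmaps a)
        (hinj.injOn) S'.toFinite (s := (Set.univ : Set V))
      rwa [Set.ncard_univ, Nat.card_eq_fintype_card] at this
    have := two_gamma_le hH hn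
    omega
  · -- ptpd ≥ 2
    calc 2 * gamma H = gamma H * 2 := Nat.mul_comm _ _
      _ ≤ S'.ncard * ptpd (corona H) S' := Nat.mul_le_mul hγS hpt

theorem stmt13 [Fintype V] (H : SimpleGraph V) (hH : H.Connected)
    (hn : 2 ≤ Fintype.card V) :
    thpd (corona H) = 2 * gamma H ∧
      ∀ S : Set V, IsPDS (corona H) (Sum.inl '' S) → IsDomSet H S := by
  refine ⟨?_, fun S h => part2 H S h⟩
  obtain ⟨D, hD, hcard⟩ := exists_gamma_set H
  have hpds : IsPDS (corona H) (Sum.inl '' D) := ⟨2, obs_two_univ hD⟩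
  have hpt2 : ptpd (corona H) (Sum.inl '' D) ≤ 2 :=
    Nat.sInf_le ⟨one_le_two, obs_two_univ hD⟩
  have himg : (Sum.inl '' D : Set (V ⊕ V)).ncard = gamma H := by
    rw [Set.ncard_image_of_injective _ Sum.inl_injective, hcard]
  have hmem : (Sum.inl '' D : Set (V ⊕ V)).ncard * ptpd (corona H) (Sum.inl '' D) ∈
      {m | ∃ S : Set (V ⊕ V), IsPDS (corona H) S ∧ m = S.ncard * ptpd (corona H) S} :=
    ⟨Sum.inl '' D, hpds, rfl⟩
  have hub : thpd (corona H) ≤ 2 * gamma H := by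
    refine le_trans (Nat.sInf_le hmem) ?_
    rw [himg]
    calc gamma H * ptpd (corona H) (Sum.inl '' D) ≤ gamma H * 2 :=
          Nat.mul_le_mul_left _ hpt2
      _ = 2 * gamma H := Nat.mul_comm _ _
  have hlb : 2 * gamma H ≤ thpd (corona H) :=
    thpd_lower H hH hn (Nat.sInf_mem ⟨_, hmem⟩)
  omega
end
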